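/- arXiv:math/0505307 — 3 statements merged into one kernel-verified Lean document; each statement's English description precedes it below -/
import Mathlib

section
/- Let H₀ and H₁ be complex Hilbert spaces and let Y be a closed linear subspace of X = H₀ ⊕₂ H₁. Then there exist closed subspaces Y₀, Z₀ ⊆ H₀ and Y₁, Z₁ ⊆ H₁ with Z₀ orthogonal to Y₀ in H₀ and Z₁ orthogonal to Y₁ in H₁, and an injective closed linear operator T from Z₀ to Z₁ whose domain is dense in Z₀ and whose range is dense in Z₁, such that Y is the internal orthogonal direct sum of the three pairwise orthogonal closed subspaces Y₀ × {0}, {0} × Y₁ and G(T) of X; that is, these three subspaces are mutually orthogonal, contained in Y, and their (closed) sum equals Y. -/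
open scoped InnerProductSpace

variable {H₀ H₁ : Type*} [NormedAddCommGroup H₀] [InnerProductSpace ℂ H₀] [CompleteSpace H₀]
  [NormedAddCommGroup H₁] [InnerProductSpace ℂ H₁] [CompleteSpace H₁]

/-- The subspace `Y₀ × {0}` of `H₀ ⊕₂ H₁`. -/
noncomputable def embed0 (Y₀ : Submodule ℂ H₀) : Submodule ℂ (WithLp 2 (H₀ × H₁)) :=
  (Y₀.prod (⊥ : Submodule ℂ H₁)).comap (WithLp.linearEquiv 2 ℂ (H₀ × H₁)).toLinearMap

/-- The subspace `{0} × Y₁` of `H₀ ⊕₂ H₁`. -/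
noncomputable def embed1 (Y₁ : Submodule ℂ H₁) : Submodule ℂ (WithLp 2 (H₀ × H₁)) :=
  ((⊥ : Submodule ℂ H₀).prod Y₁).comap (WithLp.linearEquiv 2 ℂ (H₀ × H₁)).toLinearMap

/-- The graph `G(T) = {(x, T x) : x ∈ dom}` of an operator `T` with domain
`dom ⊆ H₀` and values in `H₁`, as a subspace of `H₀ ⊕₂ H₁`. -/
noncomputable def graphSub (dom : Submodule ℂ H₀) (T : dom →ₗ[ℂ] H₁) :
    Submodule ℂ (WithLp 2 (H₀ × H₁)) :=
  LinearMap.range ((WithLp.linearEquiv 2 ℂ (H₀ × H₁)).symm.toLinearMap ∘ₗ (dom.subtype.prod T))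

/-- Every closed subspace `Y` of `X = H₀ ⊕₂ H₁` is the internal orthogonal direct sum of
three pairwise orthogonal closed subspaces `Y₀ × {0}`, `{0} × Y₁` and `G(T)`, where
`Y₀, Z₀ ⊆ H₀`, `Y₁, Z₁ ⊆ H₁` are closed subspaces with `Z₀ ⊥ Y₀`, `Z₁ ⊥ Y₁`, and `T` is an
injective closed densely defined operator from `Z₀` to `Z₁` with dense range. -/
theorem stmt_0 (Y : Submodule ℂ (WithLp 2 (H₀ × H₁)))
    (hY : IsClosed (Y : Set (WithLp 2 (H₀ × H₁)))) :
    ∃ (Y₀ Z₀ : Submodule ℂ H₀) (Y₁ Z₁ : Submodule ℂ H₁)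
      (dom : Submodule ℂ H₀) (T : dom →ₗ[ℂ] H₁),
      -- the four subspaces are closed
      IsClosed (Y₀ : Set H₀) ∧ IsClosed (Z₀ : Set H₀) ∧
      IsClosed (Y₁ : Set H₁) ∧ IsClosed (Z₁ : Set H₁) ∧
      -- `Z₀` is orthogonal to `Y₀` in `H₀`, and `Z₁` is orthogonal to `Y₁` in `H₁`
      (∀ z ∈ Z₀, ∀ y ∈ Y₀, ⟪z, y⟫_ℂ = 0) ∧
      (∀ z ∈ Z₁, ∀ y ∈ Y₁, ⟪z, y⟫_ℂ = 0) ∧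
      -- `T` is an injective operator from `Z₀` to `Z₁` with dense domain and dense range
      Function.Injective T ∧
      dom ≤ Z₀ ∧ dom.topologicalClosure = Z₀ ∧
      LinearMap.range T ≤ Z₁ ∧ (LinearMap.range T).topologicalClosure = Z₁ ∧
      -- `T` is closed, i.e. its graph is closed in `X`
      IsClosed ((graphSub dom T : Submodule ℂ (WithLp 2 (H₀ × H₁))) :
        Set (WithLp 2 (H₀ × H₁))) ∧
      -- the three subspaces `Y₀ × {0}`, `{0} × Y₁` and `G(T)` are pairwise orthogonal
      (∀ a ∈ embed0 (H₁ := H₁) Y₀, ∀ b ∈ embed1 (H₀ := H₀) Y₁, ⟪a, b⟫_ℂ = 0) ∧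
      (∀ a ∈ embed0 (H₁ := H₁) Y₀, ∀ b ∈ graphSub dom T, ⟪a, b⟫_ℂ = 0) ∧
      (∀ a ∈ embed1 (H₀ := H₀) Y₁, ∀ b ∈ graphSub dom T, ⟪a, b⟫_ℂ = 0) ∧
      -- they are contained in `Y` and their sum is `Y`
      embed0 (H₁ := H₁) Y₀ ≤ Y ∧ embed1 (H₀ := H₀) Y₁ ≤ Y ∧ graphSub dom T ≤ Y ∧
      embed0 (H₁ := H₁) Y₀ ⊔ embed1 (H₀ := H₀) Y₁ ⊔ graphSub dom T = Y := by
  classical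
  set e := WithLp.linearEquiv 2 ℂ (H₀ × H₁) with he
  set Y₀ : Submodule ℂ H₀ :=
    Y.comap (e.symm.toLinearMap ∘ₗ LinearMap.inl ℂ H₀ H₁) with hY₀def
  set Y₁ : Submodule ℂ H₁ :=
    Y.comap (e.symm.toLinearMap ∘ₗ LinearMap.inr ℂ H₀ H₁) with hY₁def
  have memY₀ : ∀ x : H₀, x ∈ Y₀ ↔ e.symm (x, 0) ∈ Y := fun x => Iff.rfl
  have memY₁ : ∀ x : H₁, x ∈ Y₁ ↔ e.symm (0, x) ∈ Y := fun x => Iff.rfl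
  set N : Submodule ℂ (WithLp 2 (H₀ × H₁)) := (Y₀.prod Y₁).comap e.toLinearMap with hNdef
  have memN : ∀ x : WithLp 2 (H₀ × H₁), x ∈ N ↔ (e x).1 ∈ Y₀ ∧ (e x).2 ∈ Y₁ := fun x => Iff.rfl
  have hsplit : ∀ x : WithLp 2 (H₀ × H₁),
      e.symm ((e x).1, 0) + e.symm (0, (e x).2) = x := by
    intro x
    have h : ((e x).1, (0 : H₁)) + ((0 : H₀), (e x).2) = e x := by
      simp [Prod.ext_iff]
    rw [← map_add, h, LinearEquiv.symm_apply_apply]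
  have hNY : N ≤ Y := by
    intro x hx
    obtain ⟨h0, h1⟩ := (memN x).mp hx
    have := Y.add_mem ((memY₀ _).mp h0) ((memY₁ _).mp h1)
    rwa [hsplit x] at this
  have hY₀c : IsClosed (Y₀ : Set H₀) := by
    have hc : Continuous (fun x : H₀ => e.symm (x, 0)) :=
      (WithLp.prod_continuous_toLp 2 H₀ H₁).comp (continuous_id.prodMk continuous_const)
    have hset : (Y₀ : Set H₀) = (fun x : H₀ => e.symm (x, 0)) ⁻¹' (Y : Set _) := rfl
    rw [hset]
    exact hY.preimage hc
  have hY₁c : IsClosed (Y₁ : Set H₁) := by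
    have hc : Continuous (fun x : H₁ => e.symm (0, x)) :=
      (WithLp.prod_continuous_toLp 2 H₀ H₁).comp (continuous_const.prodMk continuous_id)
    have hset : (Y₁ : Set H₁) = (fun x : H₁ => e.symm (0, x)) ⁻¹' (Y : Set _) := rfl
    rw [hset]
    exact hY.preimage hc
  have hNc : IsClosed (N : Set (WithLp 2 (H₀ × H₁))) := by
    have hset : (N : Set (WithLp 2 (H₀ × H₁))) = (⇑e) ⁻¹' ((Y₀ : Set H₀) ×ˢ (Y₁ : Set H₁)) := rfl
    rw [hset]
    exact (hY₀c.prod hY₁c).preimage (WithLp.prod_continuous_ofLp 2 H₀ H₁)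
  haveI : CompleteSpace N := hNc.completeSpace_coe
  set M : Submodule ℂ (WithLp 2 (H₀ × H₁)) := Y ⊓ Nᗮ with hMdef
  have hMY : M ≤ Y := inf_le_left
  have hMNperp : M ≤ Nᗮ := inf_le_right
  have hMc : IsClosed (M : Set (WithLp 2 (H₀ × H₁))) := by
    rw [hMdef, Submodule.coe_inf]
    exact hY.inter N.isClosed_orthogonal
  set M' : Submodule ℂ (H₀ × H₁) := M.map e.toLinearMap with hM'def
  have memM' : ∀ x : H₀ × H₁, x ∈ M' ↔ e.symm x ∈ M := by
    intro x
    constructor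
    · rintro ⟨m, hm, rfl⟩; simpa using hm
    · intro h; exact ⟨e.symm x, h, by simp⟩
  have hg : ∀ x : H₀ × H₁, x ∈ M' → x.1 = 0 → x.2 = 0 := by
    intro x hx h1
    have hxM := (memM' x).mp hx
    have hx2 : x.2 ∈ Y₁ := by
      have hxx : ((0 : H₀), x.2) = x := by rw [← h1]
      have := hMY hxM
      rw [memY₁, hxx]
      exact this
    have hxN : e.symm x ∈ N := by
      rw [memN]
      refine ⟨?_, ?_⟩
      · rw [e.apply_symm_apply, h1]; exact Y₀.zero_mem
      · rw [e.apply_symm_apply]; exact hx2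
    have hz : ⟪e.symm x, e.symm x⟫_ℂ = 0 :=
      (Submodule.mem_orthogonal N (e.symm x)).mp (hMNperp hxM) _ hxN
    have h0 : e.symm x = 0 := inner_self_eq_zero.mp hz
    have : x = 0 := by
      have := congrArg e h0
      rwa [e.apply_symm_apply, map_zero] at this
    exact congrArg Prod.snd this
  set f := M'.toLinearPMap with hfdef
  have hgraph : f.graph = M' := M'.toLinearPMap_graph_eq hg
  have hgs : graphSub f.domain f.toFun = M := by
    ext x
    simp only [graphSub, LinearMap.mem_range, LinearMap.coe_comp, Function.comp_apply,
      LinearMap.prod_apply, Function.prod, Submodule.coe_subtype, LinearEquiv.coe_coe]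
    constructor
    · rintro ⟨y, rfl⟩
      have hmem : ((y : H₀), f y) ∈ f.graph := f.mem_graph y
      rw [hgraph] at hmem
      rw [LinearPMap.toFun_eq_coe]
      exact (memM' _).mp hmem
    · intro hx
      have hx' : e x ∈ M' := (memM' (e x)).mpr (by simpa using hx)
      rw [← hgraph, LinearPMap.mem_graph_iff] at hx'
      obtain ⟨y, hy1, hy2⟩ := hx'
      refine ⟨y, ?_⟩
      have hpair : ((y : H₀), f.toFun y) = e x := by
        rw [LinearPMap.toFun_eq_coe]
        exact Prod.ext hy1 hy2
      rw [hpair, e.symm_apply_apply]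
  have hdomM : ∀ z : f.domain, e.symm ((z : H₀), f.toFun z) ∈ M := by
    intro z
    rw [← hgs]
    exact ⟨z, rfl⟩
  have hembed0N : embed0 (H₁ := H₁) Y₀ ≤ N :=
    Submodule.comap_mono (Submodule.prod_mono le_rfl bot_le)
  have hembed1N : embed1 (H₀ := H₀) Y₁ ≤ N :=
    Submodule.comap_mono (Submodule.prod_mono bot_le le_rfl)
  have hn0 : ∀ y ∈ Y₀, e.symm (y, (0 : H₁)) ∈ N := by
    intro y hy
    rw [memN]
    constructor
    · rw [e.apply_symm_apply]; exact hy
    · rw [e.apply_symm_apply]; exact Y₁.zero_mem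
  have hn1 : ∀ y ∈ Y₁, e.symm ((0 : H₀), y) ∈ N := by
    intro y hy
    rw [memN]
    constructor
    · rw [e.apply_symm_apply]; exact Y₀.zero_mem
    · rw [e.apply_symm_apply]; exact hy
  have hinner : ∀ (a b : H₀ × H₁), ⟪e.symm a, e.symm b⟫_ℂ = ⟪a.1, b.1⟫_ℂ + ⟪a.2, b.2⟫_ℂ := by
    intro a b
    rw [WithLp.prod_inner_apply]
    rfl
  -- orthogonality of the domain to Y₀
  have hdom0 : f.domain ≤ Y₀ᗮ := by
    intro z hz
    rw [Submodule.mem_orthogonal']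
    intro y hy
    have hmM : e.symm (z, f.toFun ⟨z, hz⟩) ∈ M := hdomM ⟨z, hz⟩
    have h0 : ⟪e.symm (y, (0 : H₁)), e.symm (z, f.toFun ⟨z, hz⟩)⟫_ℂ = 0 :=
      (Submodule.mem_orthogonal N _).mp (hMNperp hmM) _ (hn0 y hy)
    rw [hinner] at h0
    simp only [inner_zero_left, add_zero] at h0
    rw [← inner_conj_symm, h0, map_zero]
  have hran1 : LinearMap.range f.toFun ≤ Y₁ᗮ := by
    rintro _ ⟨z, rfl⟩
    rw [Submodule.mem_orthogonal']
    intro y hy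
    have hmM : e.symm ((z : H₀), f.toFun z) ∈ M := hdomM z
    have h0 : ⟪e.symm ((0 : H₀), y), e.symm ((z : H₀), f.toFun z)⟫_ℂ = 0 :=
      (Submodule.mem_orthogonal N _).mp (hMNperp hmM) _ (hn1 y hy)
    rw [hinner] at h0
    simp only [inner_zero_left, zero_add] at h0
    rw [← inner_conj_symm, h0, map_zero]
  refine ⟨Y₀, f.domain.topologicalClosure, Y₁, (LinearMap.range f.toFun).topologicalClosure,
    f.domain, f.toFun, hY₀c, Submodule.isClosed_topologicalClosure _, hY₁c,
    Submodule.isClosed_topologicalClosure _, ?_, ?_, ?_,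
    Submodule.le_topologicalClosure _, rfl, Submodule.le_topologicalClosure _, rfl,
    ?_, ?_, ?_, ?_, ?_, ?_, ?_, ?_⟩
  · -- Z₀ ⊥ Y₀
    intro z hz y hy
    have hle : f.domain.topologicalClosure ≤ Y₀ᗮ :=
      Submodule.topologicalClosure_minimal _ hdom0 Y₀.isClosed_orthogonal
    exact (Submodule.mem_orthogonal' Y₀ z).mp (hle hz) y hy
  · -- Z₁ ⊥ Y₁
    intro z hz y hy
    have hle : (LinearMap.range f.toFun).topologicalClosure ≤ Y₁ᗮ :=
      Submodule.topologicalClosure_minimal _ hran1 Y₁.isClosed_orthogonal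
    exact (Submodule.mem_orthogonal' Y₁ z).mp (hle hz) y hy
  · -- injectivity
    rw [← LinearMap.ker_eq_bot, LinearMap.ker_eq_bot']
    intro z hz
    have hmM : e.symm ((z : H₀), f.toFun z) ∈ M := hdomM z
    rw [hz] at hmM
    have hzY₀ : (z : H₀) ∈ Y₀ := (memY₀ _).mpr (hMY hmM)
    have hzN : e.symm ((z : H₀), (0 : H₁)) ∈ N := hn0 _ hzY₀
    have h0 : ⟪e.symm ((z : H₀), (0 : H₁)), e.symm ((z : H₀), (0 : H₁))⟫_ℂ = 0 :=
      (Submodule.mem_orthogonal N _).mp (hMNperp hmM) _ hzN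
    have hz0 : e.symm ((z : H₀), (0 : H₁)) = 0 := inner_self_eq_zero.mp h0
    have : ((z : H₀), (0 : H₁)) = 0 := by
      have := congrArg e hz0
      rwa [e.apply_symm_apply, map_zero] at this
    have hz1 : (z : H₀) = 0 := congrArg Prod.fst this
    exact Subtype.ext hz1
  · -- graph closed
    rw [hgs]; exact hMc
  · -- embed0 ⊥ embed1
    intro a ha b hb
    simp only [embed0, Submodule.mem_comap, Submodule.mem_prod, Submodule.mem_bot] at ha
    simp only [embed1, Submodule.mem_comap, Submodule.mem_prod, Submodule.mem_bot] at hb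
    have ha2 : (WithLp.equiv 2 (H₀ × H₁) a).2 = 0 := ha.2
    have hb1 : (WithLp.equiv 2 (H₀ × H₁) b).1 = 0 := hb.1
    rw [WithLp.prod_inner_apply]
    rw [show a.ofLp.2 = (0 : H₁) from ha2, show b.ofLp.1 = (0 : H₀) from hb1]
    simp
  · -- embed0 ⊥ graph
    intro a ha b hb
    have hbperp : b ∈ Nᗮ := hMNperp (by rw [← hgs]; exact hb)
    exact (Submodule.mem_orthogonal N b).mp hbperp a (hembed0N ha)
  · -- embed1 ⊥ graph
    intro a ha b hb
    have hbperp : b ∈ Nᗮ := hMNperp (by rw [← hgs]; exact hb)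
    exact (Submodule.mem_orthogonal N b).mp hbperp a (hembed1N ha)
  · exact le_trans hembed0N hNY
  · exact le_trans hembed1N hNY
  · rw [hgs]; exact hMY
  · -- the sum is Y
    have hsupN : embed0 (H₁ := H₁) Y₀ ⊔ embed1 (H₀ := H₀) Y₁ = N := by
      apply le_antisymm (sup_le hembed0N hembed1N)
      intro x hx
      obtain ⟨h0, h1⟩ := (memN x).mp hx
      rw [← hsplit x]
      refine Submodule.add_mem_sup ?_ ?_
      · show e ((e.symm) ((e x).1, 0)) ∈ Y₀.prod (⊥ : Submodule ℂ H₁)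
        rw [e.apply_symm_apply]
        exact ⟨h0, rfl⟩
      · show e ((e.symm) (0, (e x).2)) ∈ (⊥ : Submodule ℂ H₀).prod Y₁
        rw [e.apply_symm_apply]
        exact ⟨rfl, h1⟩
    have hNM : N ⊔ M = Y := by
      apply le_antisymm (sup_le hNY hMY)
      intro y hy
      have hytop : y ∈ N ⊔ Nᗮ := by
        rw [Submodule.sup_orthogonal_of_hasOrthogonalProjection]; trivial
      obtain ⟨p, hp, q, hq, rfl⟩ := Submodule.mem_sup.mp hytop
      have hqY : q ∈ Y := by
        have := Y.sub_mem hy (hNY hp)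
        simpa using this
      exact Submodule.add_mem_sup hp (Submodule.mem_inf.mpr ⟨hqY, hq⟩)
    rw [hgs, hsupN, hNM]
end

section
/- Let n ≥ 1, 0 < θ < 1, let α and β be positive definite n×n complex matrices, and let x be any n×n complex matrix. Then ∫₀^∞ t^{−2θ−1} [ inf_{y} ( ‖(x − y) β^{1/(1−θ)}‖_F² + t² ‖α^{1/θ} y‖_F² ) ] dt = (π / (2 sin(πθ))) · ‖α x β‖_F², where the infimum runs over all n×n complex matrices y, ‖·‖_F is the Frobenius (Hilbert–Schmidt) norm, and the real powers of α and β are taken in the sense of positive definite matrices. -/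
open scoped Matrix ComplexOrder

/-- The real power `α^s` of a Hermitian matrix, defined through its spectral
decomposition `α = U diag(λᵢ) U*` as `α^s = U diag(λᵢ^s) U*`. -/
noncomputable def matRpow {n : ℕ} {α : Matrix (Fin n) (Fin n) ℂ}
    (hα : α.IsHermitian) (s : ℝ) : Matrix (Fin n) (Fin n) ℂ :=
  (hα.eigenvectorUnitary : Matrix (Fin n) (Fin n) ℂ) *
    Matrix.diagonal (fun i => ((hα.eigenvalues i ^ s : ℝ) : ℂ)) *
    star (hα.eigenvectorUnitary : Matrix (Fin n) (Fin n) ℂ)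

/-- The squared Frobenius (Hilbert–Schmidt) norm `‖x‖_F² = Tr(x* x)` of a complex matrix. -/
noncomputable def frobSq {n : ℕ} (x : Matrix (Fin n) (Fin n) ℂ) : ℝ :=
  (Matrix.trace (xᴴ * x)).re


open MeasureTheory Set Real

section auxAnalysis

-- real beta integral
lemma betaReal (θ : ℝ) (hθ : θ ∈ Set.Ioo (0:ℝ) 1) :
    ∫ x in (0:ℝ)..1, x ^ (-θ) * (1 - x) ^ (θ - 1) = Real.pi / Real.sin (Real.pi * θ) := by
  obtain ⟨h0, h1⟩ := hθ
  have hβ := Complex.Gamma_mul_Gamma_eq_betaIntegral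
    (s := ((1 - θ : ℝ) : ℂ)) (t := ((θ : ℝ) : ℂ)) (by simpa using by linarith) (by simpa using h0)
  have hsum : ((1 - θ : ℝ) : ℂ) + ((θ : ℝ) : ℂ) = 1 := by push_cast; ring
  rw [hsum, Complex.Gamma_one, one_mul] at hβ
  have hbi : Complex.betaIntegral ((1 - θ : ℝ) : ℂ) ((θ : ℝ) : ℂ)
      = ((∫ x in (0:ℝ)..1, x ^ (-θ) * (1 - x) ^ (θ - 1) : ℝ) : ℂ) := by
    rw [Complex.betaIntegral, ← intervalIntegral.integral_ofReal]
    refine intervalIntegral.integral_congr fun x hx => ?_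
    rw [Set.uIcc_of_le (by norm_num)] at hx
    obtain ⟨hx0, hx1⟩ := hx
    have e1 : ((x : ℂ)) ^ (((1 - θ : ℝ) : ℂ) - 1) = ((x ^ (-θ) : ℝ) : ℂ) := by
      rw [Complex.ofReal_cpow hx0]
      norm_num
    have e2 : ((1 : ℂ) - x) ^ (((θ : ℝ) : ℂ) - 1) = (((1 - x) ^ (θ - 1) : ℝ) : ℂ) := by
      rw [Complex.ofReal_cpow (by linarith)]
      push_cast
      ring_nf
    rw [e1, e2]
    push_cast
    ring
  rw [hbi] at hβ
  have hg : Complex.Gamma ((1 - θ : ℝ) : ℂ) * Complex.Gamma ((θ : ℝ) : ℂ)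
      = ((Real.pi / Real.sin (Real.pi * θ) : ℝ) : ℂ) := by
    rw [Complex.Gamma_ofReal, Complex.Gamma_ofReal, mul_comm, ← Real.Gamma_mul_Gamma_one_sub θ]
    push_cast
    ring_nf
  rw [hg] at hβ
  exact_mod_cast hβ.symm


-- substitution u = x/(1-x)
lemma Kval (θ : ℝ) (hθ : θ ∈ Set.Ioo (0:ℝ) 1)
    (hbeta : ∫ x in (0:ℝ)..1, x ^ (-θ) * (1 - x) ^ (θ - 1) = Real.pi / Real.sin (Real.pi * θ)) :
    ∫ u in Set.Ioi (0:ℝ), u ^ (-θ) / (1 + u) = Real.pi / Real.sin (Real.pi * θ) := by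
  obtain ⟨h0, h1⟩ := hθ
  set f : ℝ → ℝ := fun x => x / (1 - x) with hf
  have hderiv : ∀ x ∈ Set.Ioo (0:ℝ) 1,
      HasDerivWithinAt f ((1 - x)⁻¹ ^ 2) (Set.Ioo (0:ℝ) 1) x := by
    intro x hx
    have hne : (1 - x) ≠ 0 := by nlinarith [hx.2]
    have : HasDerivAt f ((1 * (1 - x) - x * (-1)) / (1 - x) ^ 2) x := by
      exact (hasDerivAt_id x).div ((hasDerivAt_id x).const_sub 1) hne
    refine this.hasDerivWithinAt.congr_deriv ?_
    rw [inv_pow]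
    ring
  have hinj : Set.InjOn f (Set.Ioo (0:ℝ) 1) := by
    intro a ha b hb hab
    have ha' : (1 - a) ≠ 0 := by nlinarith [ha.2]
    have hb' : (1 - b) ≠ 0 := by nlinarith [hb.2]
    simp only [hf] at hab
    field_simp at hab
    nlinarith [hab]
  have himg : f '' Set.Ioo (0:ℝ) 1 = Set.Ioi 0 := by
    ext u
    simp only [Set.mem_image, Set.mem_Ioi]
    constructor
    · rintro ⟨x, hx, rfl⟩
      exact div_pos hx.1 (by linarith [hx.2])
    · intro hu
      refine ⟨u / (1 + u), ⟨div_pos hu (by linarith), ?_⟩, ?_⟩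
      · rw [div_lt_one (by linarith)]; linarith
      · simp only [hf]
        rw [div_eq_iff]
        · field_simp; ring
        · intro h
          have : u / (1 + u) = 1 := by linarith [h]
          rw [div_eq_one_iff_eq (by positivity)] at this
          linarith
  have := MeasureTheory.integral_image_eq_integral_abs_deriv_smul measurableSet_Ioo hderiv hinj
    (fun u => u ^ (-θ) / (1 + u))
  rw [himg] at this
  rw [intervalIntegral.integral_of_le (by norm_num : (0:ℝ) ≤ 1),
    MeasureTheory.integral_Ioc_eq_integral_Ioo] at hbeta
  rw [this, ← hbeta]
  refine MeasureTheory.setIntegral_congr_fun measurableSet_Ioo fun x hx => ?_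
  obtain ⟨hx0, hx1⟩ := hx
  have h1x : (0:ℝ) < 1 - x := by linarith
  have hfx : f x = x / (1 - x) := rfl
  have h1f : 1 + f x = (1 - x)⁻¹ := by
    rw [hfx]; field_simp; ring
  have hfp : f x ^ (-θ) = x ^ (-θ) * (1 - x) ^ θ := by
    rw [hfx, Real.div_rpow hx0.le h1x.le, Real.rpow_neg h1x.le, div_inv_eq_mul]
  have habs : |(1 - x)⁻¹ ^ 2| = ((1 - x) ^ 2)⁻¹ := by
    rw [abs_of_nonneg (by positivity), inv_pow]
  rw [smul_eq_mul, habs, hfp, h1f]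
  rw [Real.rpow_sub h1x, Real.rpow_one]
  field_simp


lemma gMeas (θ : ℝ) : Measurable (fun t : ℝ => t ^ (1 - 2*θ) / (1 + t^2)) := by
  fun_prop

lemma gInt (θ : ℝ) (hθ : θ ∈ Set.Ioo (0:ℝ) 1) :
    IntegrableOn (fun t : ℝ => t ^ (1 - 2*θ) / (1 + t^2)) (Set.Ioi 0) := by
  obtain ⟨h0, h1⟩ := hθ
  have hsplit : Set.Ioi (0:ℝ) = Set.Ioc 0 1 ∪ Set.Ioi 1 := by
    rw [Set.Ioc_union_Ioi_eq_Ioi (by norm_num : (0:ℝ) ≤ 1)]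
  rw [hsplit]
  refine MeasureTheory.IntegrableOn.union ?_ ?_
  · have hbase : IntegrableOn (fun t : ℝ => t ^ (1 - 2*θ)) (Set.Ioc 0 1) := by
      rw [← intervalIntegrable_iff_integrableOn_Ioc_of_le (by norm_num : (0:ℝ) ≤ 1)]
      exact intervalIntegral.intervalIntegrable_rpow' (by linarith)
    refine hbase.mono' ((gMeas θ).aestronglyMeasurable) ?_
    rw [ae_restrict_iff' measurableSet_Ioc]
    filter_upwards with t ht
    have ht0 : (0:ℝ) < t := ht.1
    rw [Real.norm_eq_abs, abs_div, abs_of_nonneg (Real.rpow_nonneg ht0.le _),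
      abs_of_pos (by positivity : (0:ℝ) < 1 + t^2)]
    calc t ^ (1 - 2*θ) / (1 + t^2) ≤ t ^ (1-2*θ) / 1 :=
          div_le_div_of_nonneg_left (Real.rpow_nonneg ht0.le _) one_pos (by nlinarith)
        _ = t ^ (1-2*θ) := div_one _
  · have hbase : IntegrableOn (fun t : ℝ => t ^ (-1 - 2*θ)) (Set.Ioi 1) :=
      integrableOn_Ioi_rpow_of_lt (by linarith) one_pos
    refine hbase.mono' ((gMeas θ).aestronglyMeasurable) ?_
    rw [ae_restrict_iff' measurableSet_Ioi]
    filter_upwards with t ht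
    have ht1 : (1:ℝ) < t := ht
    have ht0 : (0:ℝ) < t := by linarith
    rw [Real.norm_eq_abs, abs_div, abs_of_nonneg (Real.rpow_nonneg ht0.le _),
      abs_of_pos (by positivity : (0:ℝ) < 1 + t^2)]
    have key : t ^ (1 - 2*θ) / (1 + t^2) ≤ t ^ (1 - 2*θ) / t^2 := by
      apply div_le_div_of_nonneg_left (Real.rpow_nonneg ht0.le _) (by positivity) (by linarith)
    refine key.trans_eq ?_
    rw [← Real.rpow_two, ← Real.rpow_sub ht0]
    ring_nf


lemma Jval (θ : ℝ) (hθ : θ ∈ Set.Ioo (0:ℝ) 1) :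
    ∫ t in Set.Ioi (0:ℝ), t ^ (1 - 2*θ) / (1 + t^2)
      = Real.pi / (2 * Real.sin (Real.pi * θ)) := by
  have hK : ∫ u in Set.Ioi (0:ℝ), u ^ (-θ) / (1 + u) = Real.pi / Real.sin (Real.pi * θ) :=
    Kval θ hθ (betaReal θ hθ)
  have h2 : (0:ℝ) < 2 := two_pos
  have := MeasureTheory.integral_comp_rpow_Ioi_of_pos
    (g := fun u : ℝ => (1/2) * (u ^ (-θ) / (1 + u))) h2
  rw [MeasureTheory.integral_const_mul, hK] at this
  have heq : ∫ x in Set.Ioi (0:ℝ), (2 * x ^ ((2:ℝ) - 1)) • ((1/2) * ((x ^ (2:ℝ)) ^ (-θ) / (1 + x ^ (2:ℝ))))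
      = ∫ t in Set.Ioi (0:ℝ), t ^ (1 - 2*θ) / (1 + t^2) := by
    refine MeasureTheory.setIntegral_congr_fun measurableSet_Ioi fun t ht => ?_
    have ht0 : (0:ℝ) < t := ht
    have e1 : t ^ ((2:ℝ) - 1) = t := by
      norm_num
    have e2 : (t ^ (2:ℝ)) ^ (-θ) = t ^ (-2*θ) := by
      rw [← Real.rpow_mul ht0.le]; ring_nf
    have e3 : t ^ (2:ℝ) = t ^ 2 := by
      rw [Real.rpow_two]
    rw [smul_eq_mul, e1, e2, e3]
    rw [show 2 * t * (1/2 * (t ^ (-2*θ) / (1 + t^2))) = (t * t ^ (-2*θ)) / (1+t^2) by ring]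
    congr 1
    rw [show (1 - 2*θ) = 1 + (-(2*θ)) by ring, Real.rpow_add ht0, Real.rpow_one]
    ring_nf
  rw [← heq, this]
  ring


lemma keyInt (θ lam mu : ℝ) (hθ : θ ∈ Set.Ioo (0:ℝ) 1) (hlam : 0 < lam) (hmu : 0 < mu) :
    IntegrableOn (fun t : ℝ => t ^ (-2*θ - 1) * (t^2 * (lam * mu / (mu + t^2 * lam))))
      (Set.Ioi 0) ∧
    ∫ t in Set.Ioi (0:ℝ), t ^ (-2*θ - 1) * (t^2 * (lam * mu / (mu + t^2 * lam)))
      = Real.pi / (2 * Real.sin (Real.pi * θ)) * (lam ^ θ * mu ^ (1 - θ)) := by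
  have hgInt : IntegrableOn (fun t : ℝ => t ^ (1 - 2*θ) / (1 + t^2)) (Set.Ioi 0) := gInt θ hθ
  have hJ : ∫ t in Set.Ioi (0:ℝ), t ^ (1 - 2*θ) / (1 + t^2)
      = Real.pi / (2 * Real.sin (Real.pi * θ)) := Jval θ hθ
  set g : ℝ → ℝ := fun t => t ^ (1 - 2*θ) / (1 + t^2) with hg
  set c : ℝ := (lam / mu) ^ ((1:ℝ)/2) with hc
  have hc0 : 0 < c := Real.rpow_pos_of_pos (div_pos hlam hmu) _
  set A : ℝ := lam * c ^ (2*θ - 1) with hA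
  have hpt : ∀ t ∈ Set.Ioi (0:ℝ),
      t ^ (-2*θ - 1) * (t^2 * (lam * mu / (mu + t^2 * lam))) = A * g (c * t) := by
    intro t ht
    have ht0 : (0:ℝ) < t := ht
    have hden : 0 < mu + t^2 * lam := by positivity
    have hden2 : 0 < 1 + (c*t)^2 := by positivity
    have e0 : (c*t)^2 = lam/mu * t^2 := by
      rw [mul_pow, hc, ← Real.rpow_natCast ((lam/mu) ^ ((1:ℝ)/2)) 2,
        ← Real.rpow_mul (div_pos hlam hmu).le]
      norm_num
    have e1 : g (c*t) = c ^ (1 - 2*θ) * t ^ (1 - 2*θ) * (mu / (mu + t^2 * lam)) := by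
      rw [hg]
      simp only
      rw [Real.mul_rpow hc0.le ht0.le, e0]
      rw [div_eq_iff (by positivity : (1 + lam/mu*t^2) ≠ 0)]
      field_simp
    rw [e1, hA]
    have e2 : lam * c ^ (2*θ-1) * (c ^ (1 - 2*θ) * t ^ (1-2*θ) * (mu / (mu + t^2*lam)))
        = (c ^ (2*θ-1) * c ^ (1-2*θ)) * (t ^ (1-2*θ) * (lam * mu / (mu + t^2*lam))) := by
      ring
    rw [e2, ← Real.rpow_add hc0]
    norm_num
    have e3 : t ^ (-2*θ - 1) * t^2 = t ^ (1 - 2*θ) := by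
      rw [← Real.rpow_two, ← Real.rpow_add ht0]
      ring_nf
    rw [← e3]
    ring
  have hcomp : IntegrableOn (fun t : ℝ => g (c * t)) (Set.Ioi 0) := by
    have := (MeasureTheory.integrableOn_Ioi_comp_mul_left_iff g 0 hc0).2
    rw [mul_zero] at this
    exact this hgInt
  constructor
  · exact MeasureTheory.IntegrableOn.congr_fun (hcomp.const_mul A)
      (fun t ht => (hpt t ht).symm) measurableSet_Ioi
  · rw [MeasureTheory.setIntegral_congr_fun measurableSet_Ioi hpt,
      MeasureTheory.integral_const_mul]
    rw [MeasureTheory.integral_comp_mul_left_Ioi g 0 hc0, mul_zero, hJ, smul_eq_mul]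
    rw [hA]
    have : lam * c ^ (2*θ-1) * (c⁻¹ * (Real.pi / (2 * Real.sin (Real.pi * θ))))
        = (lam * (c ^ (2*θ-1) * c⁻¹)) * (Real.pi / (2 * Real.sin (Real.pi * θ))) := by ring
    rw [this, ← Real.rpow_neg_one c, ← Real.rpow_add hc0]
    have e4 : c ^ (2*θ - 1 + -1) = (lam/mu) ^ (θ - 1) := by
      rw [hc, ← Real.rpow_mul (div_pos hlam hmu).le]
      ring_nf
    rw [e4, Real.div_rpow hlam.le hmu.le]
    have e5 : lam * (lam ^ (θ-1) / mu ^ (θ-1)) = lam ^ θ * mu ^ (1-θ) := by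
      rw [Real.rpow_sub hlam, Real.rpow_sub hmu, Real.rpow_sub hmu,
        Real.rpow_one, Real.rpow_one]
      have hmuθ : mu ^ θ ≠ 0 := by positivity
      field_simp
    rw [e5]
    ring

end auxAnalysis

section helpers
variable {n : ℕ}

lemma frobSq_sum (x : Matrix (Fin n) (Fin n) ℂ) :
    frobSq x = ∑ i, ∑ j, Complex.normSq (x i j) := by
  unfold frobSq
  rw [Matrix.trace]
  simp only [Matrix.diag_apply, Matrix.mul_apply, Matrix.conjTranspose_apply]
  rw [Complex.re_sum]
  rw [Finset.sum_comm]
  refine Finset.sum_congr rfl fun i _ => ?_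
  rw [Complex.re_sum]
  refine Finset.sum_congr rfl fun j _ => ?_
  rw [RCLike.star_def, ← Complex.normSq_eq_conj_mul_self, Complex.ofReal_re]

lemma frobSq_unit_left {U : Matrix (Fin n) (Fin n) ℂ} (hU : star U * U = 1)
    (M : Matrix (Fin n) (Fin n) ℂ) : frobSq (U * M) = frobSq M := by
  rw [Matrix.star_eq_conjTranspose] at hU
  unfold frobSq
  rw [Matrix.conjTranspose_mul, Matrix.mul_assoc, ← Matrix.mul_assoc Uᴴ U M, hU, Matrix.one_mul]

lemma frobSq_unit_right {V : Matrix (Fin n) (Fin n) ℂ} (hV : V * star V = 1)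
    (M : Matrix (Fin n) (Fin n) ℂ) : frobSq (M * V) = frobSq M := by
  rw [Matrix.star_eq_conjTranspose] at hV
  unfold frobSq
  rw [Matrix.conjTranspose_mul, Matrix.mul_assoc, ← Matrix.mul_assoc Mᴴ M V,
    ← Matrix.mul_assoc Vᴴ (Mᴴ * M) V, Matrix.trace_mul_cycle, ← Matrix.mul_assoc, hV,
    Matrix.one_mul]

lemma frobSq_mul_diag (M : Matrix (Fin n) (Fin n) ℂ) (d : Fin n → ℝ) :
    frobSq (M * Matrix.diagonal (fun j => ((d j : ℝ) : ℂ)))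
      = ∑ i, ∑ j, (d j)^2 * Complex.normSq (M i j) := by
  rw [frobSq_sum]
  refine Finset.sum_congr rfl fun i _ => Finset.sum_congr rfl fun j _ => ?_
  rw [Matrix.mul_diagonal, Complex.normSq_mul, Complex.normSq_ofReal]
  ring

lemma frobSq_diag_mul (M : Matrix (Fin n) (Fin n) ℂ) (d : Fin n → ℝ) :
    frobSq (Matrix.diagonal (fun i => ((d i : ℝ) : ℂ)) * M)
      = ∑ i, ∑ j, (d i)^2 * Complex.normSq (M i j) := by
  rw [frobSq_sum]
  refine Finset.sum_congr rfl fun i _ => Finset.sum_congr rfl fun j _ => ?_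
  rw [Matrix.diagonal_mul, Complex.normSq_mul, Complex.normSq_ofReal]
  ring

lemma frobSq_diag_mul_diag (M : Matrix (Fin n) (Fin n) ℂ) (dl dr : Fin n → ℝ) :
    frobSq (Matrix.diagonal (fun i => ((dl i : ℝ) : ℂ)) * M
        * Matrix.diagonal (fun j => ((dr j : ℝ) : ℂ)))
      = ∑ i, ∑ j, (dl i)^2 * (dr j)^2 * Complex.normSq (M i j) := by
  rw [frobSq_mul_diag]
  refine Finset.sum_congr rfl fun i _ => Finset.sum_congr rfl fun j _ => ?_
  rw [Matrix.diagonal_mul, Complex.normSq_mul, Complex.normSq_ofReal]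
  ring

end helpers

variable {n : ℕ}

lemma scalar_ineq (p q : ℝ) (hp : 0 < p) (hq : 0 < q) (u v : ℂ) :
    p * q / (p + q) * Complex.normSq u ≤ p * Complex.normSq (u - v) + q * Complex.normSq v := by
  have hpq : 0 < p + q := by linarith
  rw [div_mul_eq_mul_div, div_le_iff₀ hpq]
  simp only [Complex.normSq_apply, Complex.sub_re, Complex.sub_im]
  nlinarith [sq_nonneg (p*(u.re - v.re) - q*v.re), sq_nonneg (p*(u.im - v.im) - q*v.im)]

lemma iInf_quadratic (lam mu : Fin n → ℝ) (hlam : ∀ i, 0 < lam i) (hmu : ∀ j, 0 < mu j)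
    {t : ℝ} (ht : 0 < t) (w : Matrix (Fin n) (Fin n) ℂ) :
    ⨅ z : Matrix (Fin n) (Fin n) ℂ,
      (∑ i, ∑ j, (mu j * Complex.normSq ((w - z) i j) + t^2 * lam i * Complex.normSq (z i j)))
    = ∑ i, ∑ j, t^2 * (lam i * mu j / (mu j + t^2 * lam i)) * Complex.normSq (w i j) := by
  have hden : ∀ i j, (0:ℝ) < mu j + t^2 * lam i := fun i j => by
    have := hlam i; have := hmu j; positivity
  refine le_antisymm ?_ ?_
  · set z₀ : Matrix (Fin n) (Fin n) ℂ :=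
      Matrix.of fun i j => ((mu j / (mu j + t^2 * lam i) : ℝ) : ℂ) * w i j with hz₀
    have hbdd : BddBelow (Set.range fun z : Matrix (Fin n) (Fin n) ℂ =>
        ∑ i, ∑ j, (mu j * Complex.normSq ((w - z) i j) + t^2 * lam i * Complex.normSq (z i j))) := by
      refine ⟨0, Set.forall_mem_range.2 fun z => ?_⟩
      refine Finset.sum_nonneg fun i _ => Finset.sum_nonneg fun j _ => ?_
      exact add_nonneg (mul_nonneg (hmu j).le (Complex.normSq_nonneg _))
        (mul_nonneg (mul_nonneg (sq_nonneg t) (hlam i).le) (Complex.normSq_nonneg _))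
    refine (ciInf_le hbdd z₀).trans_eq ?_
    refine Finset.sum_congr rfl fun i _ => Finset.sum_congr rfl fun j _ => ?_
    have h0 : (mu j + t^2 * lam i) ≠ 0 := (hden i j).ne'
    have hwz : (w - z₀) i j = ((t^2 * lam i / (mu j + t^2 * lam i) : ℝ) : ℂ) * w i j := by
      rw [Matrix.sub_apply, hz₀]
      show w i j - ((mu j / (mu j + t^2 * lam i) : ℝ) : ℂ) * w i j = _
      rw [show ((t^2 * lam i / (mu j + t^2 * lam i) : ℝ) : ℂ)
          = 1 - ((mu j / (mu j + t^2 * lam i) : ℝ) : ℂ) by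
        rw [← Complex.ofReal_one, ← Complex.ofReal_sub]
        congr 1
        field_simp; ring]
      ring
    have hz : z₀ i j = ((mu j / (mu j + t^2 * lam i) : ℝ) : ℂ) * w i j := rfl
    rw [hwz, hz, Complex.normSq_mul, Complex.normSq_mul, Complex.normSq_ofReal,
      Complex.normSq_ofReal]
    field_simp
    ring
  · refine le_ciInf fun z => ?_
    refine Finset.sum_le_sum fun i _ => Finset.sum_le_sum fun j _ => ?_
    have key := scalar_ineq (mu j) (t^2 * lam i) (hmu j) (by have := hlam i; positivity)
      (w i j) (z i j)
    rw [Matrix.sub_apply]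
    calc t^2 * (lam i * mu j / (mu j + t^2 * lam i)) * Complex.normSq (w i j)
        = mu j * (t^2 * lam i) / (mu j + t^2 * lam i) * Complex.normSq (w i j) := by
          rw [mul_div_assoc, mul_div_assoc]
          ring
      _ ≤ _ := key


/-- For positive definite `n×n` matrices `α, β`, `0 < θ < 1`, and any matrix `x`:
`∫₀^∞ t^{-2θ-1} inf_y (‖(x-y) β^{1/(1-θ)}‖_F² + t² ‖α^{1/θ} y‖_F²) dt
  = (π / (2 sin πθ)) ‖α x β‖_F²`. -/
theorem stmt_10 {n : ℕ} (hn : 1 ≤ n) (θ : ℝ) (hθ : θ ∈ Set.Ioo (0 : ℝ) 1)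
    (α β : Matrix (Fin n) (Fin n) ℂ) (hα : α.PosDef) (hβ : β.PosDef)
    (x : Matrix (Fin n) (Fin n) ℂ) :
    ∫ t in Set.Ioi (0 : ℝ),
        t ^ (-2 * θ - 1) *
          ⨅ y : Matrix (Fin n) (Fin n) ℂ,
            (frobSq ((x - y) * matRpow hβ.1 (1 / (1 - θ))) +
              t ^ 2 * frobSq (matRpow hα.1 (1 / θ) * y))
      = Real.pi / (2 * Real.sin (Real.pi * θ)) * frobSq (α * x * β) := by
  obtain ⟨hθ0, hθ1⟩ := hθ
  have hθ1' : (0:ℝ) < 1 - θ := by linarith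
  -- abbreviations
  set U : Matrix (Fin n) (Fin n) ℂ := (hα.1.eigenvectorUnitary : Matrix (Fin n) (Fin n) ℂ)
    with hUdef
  set V : Matrix (Fin n) (Fin n) ℂ := (hβ.1.eigenvectorUnitary : Matrix (Fin n) (Fin n) ℂ)
    with hVdef
  have hUmem := (hα.1.eigenvectorUnitary).2
  rw [Unitary.mem_iff] at hUmem
  obtain ⟨hUl, hUr⟩ := hUmem
  have hVmem := (hβ.1.eigenvectorUnitary).2
  rw [Unitary.mem_iff] at hVmem
  obtain ⟨hVl, hVr⟩ := hVmem
  set a : Fin n → ℝ := hα.1.eigenvalues with hadef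
  set b : Fin n → ℝ := hβ.1.eigenvalues with hbdef
  have ha : ∀ i, 0 < a i := fun i => hα.eigenvalues_pos i
  have hb : ∀ j, 0 < b j := fun j => hβ.eigenvalues_pos j
  set lam : Fin n → ℝ := fun i => a i ^ ((2:ℝ)/θ) with hlamdef
  set mu : Fin n → ℝ := fun j => b j ^ ((2:ℝ)/(1-θ)) with hmudef
  have hlam : ∀ i, 0 < lam i := fun i => Real.rpow_pos_of_pos (ha i) _
  have hmu : ∀ j, 0 < mu j := fun j => Real.rpow_pos_of_pos (hb j) _
  set c : Fin n → Fin n → ℝ := fun i j => Complex.normSq ((star U * x * V) i j) with hcdef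
  have hsq : ∀ (r s : ℝ), 0 < r → (r ^ s)^2 = r ^ (s*2) := fun r s hr => by
    rw [← Real.rpow_natCast (r^s) 2, ← Real.rpow_mul hr.le]
    norm_num
  have hmusq : ∀ j, (b j ^ ((1:ℝ)/(1-θ)))^2 = mu j := fun j => by
    rw [hsq _ _ (hb j), hmudef]
    congr 1
    ring
  have hlamsq : ∀ i, (a i ^ ((1:ℝ)/θ))^2 = lam i := fun i => by
    rw [hsq _ _ (ha i), hlamdef]
    congr 1
    ring
  -- the quadratic functional in diagonalized form
  have hFy : ∀ (t : ℝ) (y : Matrix (Fin n) (Fin n) ℂ),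
      frobSq ((x - y) * matRpow hβ.1 (1 / (1 - θ))) +
        t ^ 2 * frobSq (matRpow hα.1 (1 / θ) * y)
      = ∑ i, ∑ j, (mu j * Complex.normSq ((star U * x * V - star U * y * V) i j)
          + t^2 * lam i * Complex.normSq ((star U * y * V) i j)) := by
    intro t y
    have h1 : frobSq ((x - y) * matRpow hβ.1 (1 / (1 - θ)))
        = ∑ i, ∑ j, mu j * Complex.normSq ((star U * x * V - star U * y * V) i j) := by
      show frobSq ((x - y) * (V * Matrix.diagonal (fun j => ((b j ^ ((1:ℝ)/(1-θ)) : ℝ) : ℂ))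
          * star V)) = _
      have e1 : (x - y) * (V * Matrix.diagonal (fun j => ((b j ^ ((1:ℝ)/(1-θ)) : ℝ) : ℂ))
            * star V)
          = ((x - y) * V * Matrix.diagonal (fun j => ((b j ^ ((1:ℝ)/(1-θ)) : ℝ) : ℂ)))
            * star V := by
        simp only [Matrix.mul_assoc]
      rw [e1, frobSq_unit_right (by rw [star_star]; exact hVl) _,
        ← frobSq_unit_left (by rw [star_star]; exact hUr) _]
      have e2 : star U * ((x - y) * V * Matrix.diagonal
            (fun j => ((b j ^ ((1:ℝ)/(1-θ)) : ℝ) : ℂ)))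
          = (star U * x * V - star U * y * V) * Matrix.diagonal
            (fun j => ((b j ^ ((1:ℝ)/(1-θ)) : ℝ) : ℂ)) := by
        simp only [Matrix.sub_mul, Matrix.mul_sub, Matrix.mul_assoc]
      rw [e2, frobSq_mul_diag]
      exact Finset.sum_congr rfl fun i _ => Finset.sum_congr rfl fun j _ => by rw [hmusq]
    have h2 : frobSq (matRpow hα.1 (1 / θ) * y)
        = ∑ i, ∑ j, lam i * Complex.normSq ((star U * y * V) i j) := by
      show frobSq ((U * Matrix.diagonal (fun i => ((a i ^ ((1:ℝ)/θ) : ℝ) : ℂ)) * star U) * y) = _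
      have e1 : (U * Matrix.diagonal (fun i => ((a i ^ ((1:ℝ)/θ) : ℝ) : ℂ)) * star U) * y
          = U * (Matrix.diagonal (fun i => ((a i ^ ((1:ℝ)/θ) : ℝ) : ℂ)) * (star U * y)) := by
        simp only [Matrix.mul_assoc]
      rw [e1, frobSq_unit_left hUl, ← frobSq_unit_right hVr]
      have e2 : Matrix.diagonal (fun i => ((a i ^ ((1:ℝ)/θ) : ℝ) : ℂ)) * (star U * y) * V
          = Matrix.diagonal (fun i => ((a i ^ ((1:ℝ)/θ) : ℝ) : ℂ)) * (star U * y * V) := by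
        simp only [Matrix.mul_assoc]
      rw [e2, frobSq_diag_mul]
      exact Finset.sum_congr rfl fun i _ => Finset.sum_congr rfl fun j _ => by rw [hlamsq]
    rw [h1, h2, Finset.mul_sum]
    simp_rw [Finset.mul_sum]
    rw [← Finset.sum_add_distrib]
    refine Finset.sum_congr rfl fun i _ => ?_
    rw [← Finset.sum_add_distrib]
    refine Finset.sum_congr rfl fun j _ => ?_
    ring
  -- the infimum
  have hinf : ∀ t : ℝ, 0 < t →
      (⨅ y : Matrix (Fin n) (Fin n) ℂ,
        (frobSq ((x - y) * matRpow hβ.1 (1 / (1 - θ))) +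
          t ^ 2 * frobSq (matRpow hα.1 (1 / θ) * y)))
      = ∑ i, ∑ j, t^2 * (lam i * mu j / (mu j + t^2 * lam i)) * c i j := by
    intro t ht
    set G : Matrix (Fin n) (Fin n) ℂ → ℝ := fun z =>
      ∑ i, ∑ j, (mu j * Complex.normSq ((star U * x * V - z) i j)
        + t^2 * lam i * Complex.normSq (z i j)) with hGdef
    have hsurj : Function.Surjective (fun y : Matrix (Fin n) (Fin n) ℂ => star U * y * V) := by
      intro z
      refine ⟨U * z * star V, ?_⟩
      show star U * (U * z * star V) * V = z
      have : star U * (U * z * star V) * V = (star U * U) * z * (star V * V) := by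
        simp only [Matrix.mul_assoc]
      rw [this, hUl, hVl, Matrix.one_mul, Matrix.mul_one]
    have h₁ : (⨅ y : Matrix (Fin n) (Fin n) ℂ,
        (frobSq ((x - y) * matRpow hβ.1 (1 / (1 - θ))) +
          t ^ 2 * frobSq (matRpow hα.1 (1 / θ) * y)))
        = ⨅ y : Matrix (Fin n) (Fin n) ℂ, G (star U * y * V) := iInf_congr (fun y => hFy t y)
    have h₂ : (⨅ y : Matrix (Fin n) (Fin n) ℂ, G (star U * y * V))
        = ⨅ z : Matrix (Fin n) (Fin n) ℂ, G z := hsurj.iInf_comp G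
    rw [h₁, h₂, hGdef]
    exact iInf_quadratic lam mu hlam hmu ht (star U * x * V)
  -- rewrite the integral
  have hstep : ∫ t in Set.Ioi (0 : ℝ),
        t ^ (-2 * θ - 1) *
          ⨅ y : Matrix (Fin n) (Fin n) ℂ,
            (frobSq ((x - y) * matRpow hβ.1 (1 / (1 - θ))) +
              t ^ 2 * frobSq (matRpow hα.1 (1 / θ) * y))
      = ∫ t in Set.Ioi (0 : ℝ), ∑ i, ∑ j,
          (t ^ (-2*θ - 1) * (t^2 * (lam i * mu j / (mu j + t^2 * lam i)))) * c i j := by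
    refine MeasureTheory.setIntegral_congr_fun measurableSet_Ioi fun t ht => ?_
    rw [hinf t ht, Finset.mul_sum]
    refine Finset.sum_congr rfl fun i _ => ?_
    rw [Finset.mul_sum]
    refine Finset.sum_congr rfl fun j _ => ?_
    ring
  rw [hstep]
  have hkey : ∀ i j, IntegrableOn
      (fun t : ℝ => t ^ (-2*θ - 1) * (t^2 * (lam i * mu j / (mu j + t^2 * lam i))))
      (Set.Ioi 0) ∧
      ∫ t in Set.Ioi (0:ℝ), t ^ (-2*θ - 1) * (t^2 * (lam i * mu j / (mu j + t^2 * lam i)))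
      = Real.pi / (2 * Real.sin (Real.pi * θ)) * (lam i ^ θ * mu j ^ (1 - θ)) :=
    fun i j => keyInt θ (lam i) (mu j) ⟨hθ0, hθ1⟩ (hlam i) (hmu j)
  rw [MeasureTheory.integral_finset_sum _ (fun i _ =>
    integrable_finset_sum _ (fun j _ => ((hkey i j).1.mul_const (c i j))))]
  have : ∀ i, ∫ t in Set.Ioi (0:ℝ), ∑ j,
      (t ^ (-2*θ - 1) * (t^2 * (lam i * mu j / (mu j + t^2 * lam i)))) * c i j
      = ∑ j, (Real.pi / (2 * Real.sin (Real.pi * θ)) * (lam i ^ θ * mu j ^ (1 - θ))) * c i j := by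
    intro i
    rw [MeasureTheory.integral_finset_sum _ (fun j _ => ((hkey i j).1.mul_const (c i j)))]
    refine Finset.sum_congr rfl fun j _ => ?_
    rw [MeasureTheory.integral_mul_const, (hkey i j).2]
  simp_rw [this]
  -- compute the RHS
  have hrhs : frobSq (α * x * β) = ∑ i, ∑ j, (a i)^2 * (b j)^2 * c i j := by
    have hspecα := hα.1.spectral_theorem
    have hspecβ := hβ.1.spectral_theorem
    have e1 : α * x * β
        = U * (Matrix.diagonal (fun i => ((a i : ℝ) : ℂ)) * (star U * x * V)
            * Matrix.diagonal (fun j => ((b j : ℝ) : ℂ))) * star V := by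
      calc α * x * β
          = (U * Matrix.diagonal (RCLike.ofReal ∘ a) * star U) * x
            * (V * Matrix.diagonal (RCLike.ofReal ∘ b) * star V) := by
            rw [hspecα, hspecβ, Unitary.conjStarAlgAut_apply, Unitary.conjStarAlgAut_apply]
        _ = _ := by
            simp only [Matrix.mul_assoc]
            rfl
    rw [e1, frobSq_unit_right (by rw [star_star]; exact hVl) _, frobSq_unit_left hUl,
      frobSq_diag_mul_diag]
  rw [hrhs, Finset.mul_sum]
  refine Finset.sum_congr rfl fun i _ => ?_
  rw [Finset.mul_sum]
  refine Finset.sum_congr rfl fun j _ => ?_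
  have hl : lam i ^ θ = (a i)^2 := by
    rw [hlamdef]
    show (a i ^ ((2:ℝ)/θ)) ^ θ = _
    rw [← Real.rpow_mul (ha i).le, div_mul_cancel₀ _ hθ0.ne', Real.rpow_two]
  have hm : mu j ^ (1-θ) = (b j)^2 := by
    rw [hmudef]
    show (b j ^ ((2:ℝ)/(1-θ))) ^ (1-θ) = _
    rw [← Real.rpow_mul (hb j).le, div_mul_cancel₀ _ hθ1'.ne', Real.rpow_two]
  rw [hl, hm]
  ring
end

section
/- Let (Ω, μ) be a σ-finite measure space, let w : Ω → (0, ∞) be measurable, let 0 < θ < 1, and let f ∈ L²(μ). Then, as an identity in [0, ∞], ∫₀^∞ t^{−2θ−1} [ inf { ‖f − g‖_{L²(μ)}² + t² ‖w g‖_{L²(μ)}² : g measurable with g ∈ L²(μ) and w g ∈ L²(μ) } ] dt = (π / (2 sin(πθ))) ∫_Ω w^{2θ} |f|² dμ. -/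
open MeasureTheory
open scoped ENNReal

open Set Real

lemma beta_real {θ : ℝ} (hθ : θ ∈ Set.Ioo (0:ℝ) 1) :
    ∫ y in Ioo (0:ℝ) 1, y ^ (-θ) * (1 - y) ^ (θ - 1) = π / Real.sin (π * θ) := by
  have h1 : (0:ℝ) < 1 - θ := by linarith [hθ.2]
  have hb : Complex.betaIntegral ((1:ℂ) - θ) θ = ↑(π / Real.sin (π * θ)) := by
    have h2 := Complex.Gamma_mul_Gamma_eq_betaIntegral (s := (1:ℂ) - θ) (t := (θ:ℂ))
      (by simpa using h1) (by simpa using hθ.1)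
    rw [sub_add_cancel, Complex.Gamma_one, one_mul] at h2
    rw [← h2, mul_comm, Complex.Gamma_mul_Gamma_one_sub (θ:ℂ)]
    push_cast
    rfl
  have hcast : Complex.betaIntegral ((1:ℂ) - θ) θ
      = ↑(∫ y in Ioo (0:ℝ) 1, y ^ (-θ) * (1 - y) ^ (θ - 1)) := by
    rw [Complex.betaIntegral]
    rw [intervalIntegral.integral_of_le zero_le_one, integral_Ioc_eq_integral_Ioo]
    rw [show ((∫ y in Ioo (0:ℝ) 1, y ^ (-θ) * (1 - y) ^ (θ - 1) : ℝ) : ℂ)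
        = ∫ y in Ioo (0:ℝ) 1, ((y ^ (-θ) * (1 - y) ^ (θ - 1) : ℝ) : ℂ) from (integral_ofReal).symm]
    refine setIntegral_congr_fun measurableSet_Ioo fun x hx => ?_
    rw [Complex.ofReal_mul, Complex.ofReal_cpow hx.1.le,
      Complex.ofReal_cpow (by linarith [hx.2] : (0:ℝ) ≤ 1 - x)]
    push_cast
    rw [show (1 : ℂ) - (θ:ℂ) - 1 = -θ by ring]
  rw [hcast] at hb
  exact_mod_cast hb

lemma D_eq {θ : ℝ} (hθ : θ ∈ Set.Ioo (0:ℝ) 1) :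
    ∫ u in Ioi (0:ℝ), u ^ (-θ) * (1 + u)⁻¹ = π / Real.sin (π * θ) := by
  have hderiv : ∀ y ∈ Ioo (0:ℝ) 1,
      HasDerivWithinAt (fun y : ℝ => y / (1 - y)) (((1 - y) ^ 2)⁻¹) (Ioo (0:ℝ) 1) y := by
    intro y hy
    have h01 : (1:ℝ) - y ≠ 0 := by have := hy.2; intro h; linarith [hy.2]
    have := (hasDerivAt_id y).div ((hasDerivAt_const y (1:ℝ)).sub (hasDerivAt_id y)) h01
    refine this.hasDerivWithinAt.congr_deriv ?_
    simp only [Pi.sub_apply, id]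
    ring
  have hinj : InjOn (fun y : ℝ => y / (1 - y)) (Ioo 0 1) := by
    intro a ha b hb h
    have ha1 : (1:ℝ) - a ≠ 0 := by intro h'; linarith [ha.2]
    have hb1 : (1:ℝ) - b ≠ 0 := by intro h'; linarith [hb.2]
    field_simp at h
    linarith
  have himg : (fun y : ℝ => y / (1 - y)) '' Ioo 0 1 = Ioi 0 := by
    ext u
    simp only [mem_image, mem_Ioi]
    constructor
    · rintro ⟨y, hy, rfl⟩
      exact div_pos hy.1 (by linarith [hy.2])
    · intro hu
      refine ⟨u / (1 + u), ⟨div_pos hu (by linarith), by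
        rw [div_lt_one (by linarith)]; linarith⟩, ?_⟩
      have h1u : (1:ℝ) + u ≠ 0 := by positivity
      field_simp
      ring
  have key := integral_image_eq_integral_abs_deriv_smul measurableSet_Ioo hderiv hinj
    (fun u : ℝ => u ^ (-θ) * (1 + u)⁻¹)
  rw [himg] at key
  rw [key, ← beta_real hθ]
  refine setIntegral_congr_fun measurableSet_Ioo fun y hy => ?_
  have hy0 : (0:ℝ) < y := hy.1
  have h01 : (0:ℝ) < 1 - y := by linarith [hy.2]
  have h2 : (1:ℝ) + y / (1 - y) = (1 - y)⁻¹ := by field_simp; ring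
  rw [smul_eq_mul, abs_of_pos (by positivity), Real.div_rpow hy0.le h01.le, h2, inv_inv,
    Real.rpow_sub h01, Real.rpow_one, Real.rpow_neg h01.le]
  have h3 : (1 - y) ^ θ ≠ 0 := ne_of_gt (Real.rpow_pos_of_pos h01 θ)
  field_simp


lemma sin_pi_theta_pos {θ : ℝ} (hθ : θ ∈ Set.Ioo (0:ℝ) 1) : 0 < Real.sin (π * θ) :=
  Real.sin_pos_of_pos_of_lt_pi (by have := Real.pi_pos; have := hθ.1; positivity)
    (by nlinarith [Real.pi_pos, hθ.2])

lemma C_eq {θ : ℝ} (hθ : θ ∈ Set.Ioo (0:ℝ) 1) :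
    ∫ t in Ioi (0:ℝ), t ^ (1 - 2*θ) * (1 + t^2)⁻¹ = π / (2 * Real.sin (π * θ)) := by
  have h := integral_comp_rpow_Ioi_of_pos (g := fun u : ℝ => u ^ (-θ) * (1 + u)⁻¹)
    (p := 2) two_pos
  rw [D_eq hθ] at h
  have h2 : ∫ x in Ioi (0:ℝ), ((2:ℝ) * x ^ ((2:ℝ) - 1)) • ((x ^ (2:ℝ)) ^ (-θ) * (1 + x ^ (2:ℝ))⁻¹)
      = ∫ t in Ioi (0:ℝ), 2 * (t ^ (1 - 2*θ) * (1 + t^2)⁻¹) := by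
    refine setIntegral_congr_fun measurableSet_Ioi fun x hx => ?_
    have hx0 : (0:ℝ) < x := hx
    have e0 : x ^ (2:ℝ) = x ^ (2:ℕ) := by
      rw [show (2:ℝ) = ((2:ℕ):ℝ) by norm_num, Real.rpow_natCast]
    have e2 : x ^ ((2:ℝ)-1) * x ^ ((2:ℝ) * -θ) = x ^ (1 - 2*θ) := by
      rw [← Real.rpow_add hx0]; congr 1; ring
    rw [smul_eq_mul, ← Real.rpow_mul hx0.le, e0]
    calc (2 * x ^ ((2:ℝ)-1)) * (x ^ ((2:ℝ) * -θ) * (1 + x^2)⁻¹)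
        = 2 * ((x ^ ((2:ℝ)-1) * x ^ ((2:ℝ) * -θ)) * (1 + x^2)⁻¹) := by ring
      _ = 2 * (x ^ (1 - 2*θ) * (1 + x^2)⁻¹) := by rw [e2]
  rw [h2, integral_const_mul] at h
  have hs := sin_pi_theta_pos hθ
  rw [eq_div_iff (by positivity)]
  rw [eq_div_iff hs.ne'] at h
  linear_combination h

lemma psi_contOn {θ b : ℝ} :
    ContinuousOn (fun t : ℝ => t ^ (1 - 2*θ) * (b^2 / (1 + t^2 * b^2))) (Ioi (0:ℝ)) := by
  intro t ht
  have ht0 : (0:ℝ) < t := ht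
  have hden : (0:ℝ) < 1 + t^2 * b^2 := by positivity
  have hc : Continuous fun t : ℝ => 1 + t^2 * b^2 := by fun_prop
  exact ((Real.continuousAt_rpow_const t _ (Or.inl ht0.ne')).continuousWithinAt.mul
    ((continuousAt_const.div hc.continuousAt hden.ne').continuousWithinAt))

lemma psi_integrable {θ : ℝ} (hθ : θ ∈ Set.Ioo (0:ℝ) 1) {b : ℝ} (hb : 0 < b) :
    IntegrableOn (fun t : ℝ => t ^ (1 - 2*θ) * (b^2 / (1 + t^2 * b^2))) (Ioi (0:ℝ)) := by
  have hsub : Ioc (0:ℝ) 1 ∪ Ioi 1 = Ioi (0:ℝ) := Ioc_union_Ioi_eq_Ioi zero_le_one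
  rw [← hsub]
  have hmeas1 : AEStronglyMeasurable (fun t : ℝ => t ^ (1 - 2*θ) * (b^2 / (1 + t^2 * b^2)))
      (volume.restrict (Ioc (0:ℝ) 1)) :=
    (psi_contOn.mono Ioc_subset_Ioi_self).aestronglyMeasurable measurableSet_Ioc
  have hmeas2 : AEStronglyMeasurable (fun t : ℝ => t ^ (1 - 2*θ) * (b^2 / (1 + t^2 * b^2)))
      (volume.restrict (Ioi (1:ℝ))) :=
    (psi_contOn.mono (Ioi_subset_Ioi zero_le_one)).aestronglyMeasurable measurableSet_Ioi
  refine IntegrableOn.union ?_ ?_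
  · -- on Ioc 0 1, dominate by b^2 * t^(1-2θ)
    have hint : IntegrableOn (fun t : ℝ => b^2 * t ^ (1 - 2*θ)) (Ioc (0:ℝ) 1) := by
      have := (intervalIntegral.intervalIntegrable_rpow' (a := 0) (b := 1)
        (r := 1 - 2*θ) (by linarith [hθ.2])).const_mul (b^2)
      rwa [intervalIntegrable_iff_integrableOn_Ioc_of_le zero_le_one] at this
    refine hint.mono' hmeas1 ?_
    filter_upwards [ae_restrict_mem measurableSet_Ioc] with t ht
    have ht0 : (0:ℝ) < t := ht.1
    have hden : (0:ℝ) < 1 + t^2 * b^2 := by positivity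
    have h1 : t ^ (1 - 2*θ) * (b^2 / (1 + t^2 * b^2)) ≤ b^2 * t ^ (1 - 2*θ) := by
      rw [mul_comm (b^2)]
      gcongr
      rw [div_le_iff₀ hden]
      nlinarith [Real.rpow_pos_of_pos ht0 (1-2*θ), sq_nonneg (t*b)]
    rw [Real.norm_eq_abs, abs_of_nonneg (by positivity)]
    exact h1
  · -- on Ioi 1, dominate by t^(-1-2θ)
    have hint : IntegrableOn (fun t : ℝ => t ^ (-1 - 2*θ)) (Ioi (1:ℝ)) :=
      integrableOn_Ioi_rpow_of_lt (by linarith [hθ.1]) one_pos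
    refine hint.mono' hmeas2 ?_
    filter_upwards [ae_restrict_mem measurableSet_Ioi] with t ht
    have ht0 : (0:ℝ) < t := lt_trans one_pos ht
    have hden : (0:ℝ) < 1 + t^2 * b^2 := by positivity
    rw [Real.norm_eq_abs, abs_of_nonneg (by positivity)]
    have key : b^2 / (1 + t^2 * b^2) ≤ t ^ (-2 : ℝ) := by
      rw [Real.rpow_neg ht0.le, show ((2:ℝ)) = ((2:ℕ):ℝ) by norm_num, Real.rpow_natCast,
        div_le_iff₀ hden, inv_mul_eq_div, le_div_iff₀ (by positivity)]
      nlinarith [sq_nonneg (t*b)]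
    calc t ^ (1 - 2*θ) * (b^2 / (1 + t^2 * b^2)) ≤ t ^ (1 - 2*θ) * t ^ (-2:ℝ) := by
          gcongr
      _ = t ^ (-1 - 2*θ) := by rw [← Real.rpow_add ht0]; congr 1; ring

lemma psi_integral {θ : ℝ} (hθ : θ ∈ Set.Ioo (0:ℝ) 1) {b : ℝ} (hb : 0 < b) :
    ∫ t in Ioi (0:ℝ), t ^ (1 - 2*θ) * (b^2 / (1 + t^2 * b^2))
      = b ^ (2*θ) * (π / (2 * Real.sin (π * θ))) := by
  have hcv := integral_comp_mul_left_Ioi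
    (fun s : ℝ => b ^ (1+2*θ) * (s ^ (1-2*θ) * (1 + s^2)⁻¹)) 0 hb
  simp only [mul_zero] at hcv
  rw [integral_const_mul, integral_const_mul, C_eq hθ] at hcv
  have hL : b ^ (1+2*θ) * ∫ x in Ioi (0:ℝ), ((b*x) ^ (1-2*θ) * (1 + (b*x)^2)⁻¹)
      = ∫ t in Ioi (0:ℝ), t ^ (1 - 2*θ) * (b^2 / (1 + t^2 * b^2)) := by
    rw [← integral_const_mul]
    refine setIntegral_congr_fun measurableSet_Ioi fun x hx => ?_
    have hx0 : (0:ℝ) < x := hx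
    rw [Real.mul_rpow hb.le hx0.le]
    have e1 : b ^ (1+2*θ) * b ^ (1-2*θ) = b^2 := by
      rw [← Real.rpow_add hb, show (1+2*θ)+(1-2*θ) = ((2:ℕ):ℝ) by push_cast; ring,
        Real.rpow_natCast]
    have e2 : (1 + (b*x)^2) = 1 + x^2 * b^2 := by ring
    rw [e2]
    calc b ^ (1+2*θ) * (b ^ (1-2*θ) * x ^ (1-2*θ) * (1 + x^2*b^2)⁻¹)
        = (b ^ (1+2*θ) * b ^ (1-2*θ)) * (x ^ (1-2*θ) * (1 + x^2*b^2)⁻¹) := by ring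
      _ = x ^ (1-2*θ) * (b^2 / (1 + x^2*b^2)) := by rw [e1]; ring
  rw [hL, smul_eq_mul] at hcv
  rw [hcv, ← mul_assoc]
  congr 1
  rw [← Real.rpow_neg_one b, ← Real.rpow_add hb]
  congr 1
  ring

lemma Jb {θ : ℝ} (hθ : θ ∈ Set.Ioo (0:ℝ) 1) {b : ℝ} (hb : 0 < b) :
    ∫⁻ t in Ioi (0:ℝ), ENNReal.ofReal (t ^ (-2*θ-1))
        * ENNReal.ofReal (t^2 * b^2 / (1 + t^2 * b^2))
      = ENNReal.ofReal (π / (2 * Real.sin (π * θ))) * ENNReal.ofReal (b ^ (2*θ)) := by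
  have h1 : ∀ t ∈ Ioi (0:ℝ), ENNReal.ofReal (t ^ (-2*θ-1))
        * ENNReal.ofReal (t^2 * b^2 / (1 + t^2 * b^2))
      = ENNReal.ofReal (t ^ (1 - 2*θ) * (b^2 / (1 + t^2 * b^2))) := by
    intro t ht
    have ht0 : (0:ℝ) < t := ht
    have hden : (0:ℝ) < 1 + t^2 * b^2 := by positivity
    rw [← ENNReal.ofReal_mul (Real.rpow_nonneg ht0.le _)]
    congr 1
    have e : t ^ (-2*θ-1) * t^(2:ℕ) = t ^ (1 - 2*θ) := by
      rw [← Real.rpow_natCast t 2, ← Real.rpow_add ht0]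
      congr 1
      push_cast; ring
    calc t ^ (-2*θ-1) * (t^2 * b^2 / (1 + t^2 * b^2))
        = (t ^ (-2*θ-1) * t^2) * (b^2 / (1 + t^2 * b^2)) := by ring
      _ = t ^ (1 - 2*θ) * (b^2 / (1 + t^2 * b^2)) := by rw [e]
  rw [setLIntegral_congr_fun measurableSet_Ioi h1]
  have hnn : 0 ≤ᵐ[volume.restrict (Ioi (0:ℝ))]
      fun t : ℝ => t ^ (1 - 2*θ) * (b^2 / (1 + t^2 * b^2)) := by
    filter_upwards [ae_restrict_mem measurableSet_Ioi] with t ht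
    have ht0 : (0:ℝ) < t := ht
    positivity
  rw [← ofReal_integral_eq_lintegral_ofReal (psi_integrable hθ hb) hnn, psi_integral hθ hb,
    ENNReal.ofReal_mul (Real.rpow_nonneg hb.le _), mul_comm]

lemma ennsq (x : ℂ) : (‖x‖₊ : ℝ≥0∞)^2 = ENNReal.ofReal (‖x‖^2) := by
  rw [ENNReal.ofReal_pow (norm_nonneg x)]
  exact congrArg (· ^ 2) (ofReal_norm_eq_enorm x).symm

lemma quad_ineq {a u v : ℝ} (ha : 0 ≤ a) (hu : 0 ≤ u) (hv : 0 ≤ v) :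
    a / (1 + a) * (u + v)^2 ≤ u^2 + a * v^2 := by
  rw [div_mul_eq_mul_div, div_le_iff₀ (by positivity)]
  nlinarith [sq_nonneg (u - a * v)]

lemma inf_eq {Ω : Type*} [MeasurableSpace Ω] (μ : Measure Ω)
    (w : Ω → ℝ) (hw : Measurable w) (hwpos : ∀ ω, 0 < w ω)
    (f : Ω → ℂ) (hfm : Measurable f) (hf : MemLp f 2 μ) {t : ℝ} (ht : 0 < t) :
    (⨅ (g : Ω → ℂ) (_ : Measurable g) (_ : MemLp g 2 μ)
        (_ : MemLp (fun ω => w ω * g ω) 2 μ),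
        ((∫⁻ ω, (‖f ω - g ω‖₊ : ℝ≥0∞) ^ 2 ∂μ) +
          ENNReal.ofReal (t ^ 2) * ∫⁻ ω, (‖w ω * g ω‖₊ : ℝ≥0∞) ^ 2 ∂μ))
      = ∫⁻ ω, ENNReal.ofReal (t^2 * (w ω)^2 / (1 + t^2 * (w ω)^2))
          * (‖f ω‖₊ : ℝ≥0∞) ^ 2 ∂μ := by
  have hden : ∀ ω, (0:ℝ) < 1 + t^2 * (w ω)^2 := fun ω => by positivity
  -- combine the two lintegrals into one, for measurable g
  have hcomb : ∀ (g : Ω → ℂ), Measurable g →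
      (∫⁻ ω, (‖f ω - g ω‖₊ : ℝ≥0∞) ^ 2 ∂μ) +
          ENNReal.ofReal (t ^ 2) * ∫⁻ ω, (‖w ω * g ω‖₊ : ℝ≥0∞) ^ 2 ∂μ
      = ∫⁻ ω, ((‖f ω - g ω‖₊ : ℝ≥0∞) ^ 2
          + ENNReal.ofReal (t ^ 2) * (‖w ω * g ω‖₊ : ℝ≥0∞) ^ 2) ∂μ := by
    intro g hg
    rw [← lintegral_const_mul _ (by fun_prop), ← lintegral_add_left (by fun_prop)]
  apply le_antisymm
  · -- choose the optimal g
    set g₀ : Ω → ℂ := fun ω => (((1 + t^2 * (w ω)^2)⁻¹ : ℝ) : ℂ) * f ω with hg₀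
    have hg₀m : Measurable g₀ := by fun_prop
    have hg₀norm : ∀ ω, ‖g₀ ω‖ = (1 + t^2 * (w ω)^2)⁻¹ * ‖f ω‖ := by
      intro ω
      rw [hg₀, norm_mul, Complex.norm_real, Real.norm_eq_abs,
        abs_of_pos (inv_pos.mpr (hden ω))]
    have hg₀lp : MemLp g₀ 2 μ := by
      refine hf.of_le hg₀m.aestronglyMeasurable (Filter.Eventually.of_forall fun ω => ?_)
      rw [hg₀norm ω]
      have h1 : (1 + t^2 * (w ω)^2)⁻¹ ≤ 1 := by
        rw [inv_le_one_iff₀]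
        right
        nlinarith [sq_nonneg (t * w ω)]
      calc (1 + t^2 * (w ω)^2)⁻¹ * ‖f ω‖ ≤ 1 * ‖f ω‖ := by gcongr
        _ = ‖f ω‖ := one_mul _
    have hwg₀lp : MemLp (fun ω => w ω * g₀ ω) 2 μ := by
      refine (hf.const_mul (((2*t)⁻¹ : ℝ) : ℂ)).of_le
        (((Complex.measurable_ofReal.comp hw).mul hg₀m).aestronglyMeasurable)
        (Filter.Eventually.of_forall fun ω => ?_)
      have hwo := hwpos ω
      rw [norm_mul, Complex.norm_real, Real.norm_eq_abs, abs_of_pos hwo, hg₀norm ω,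
        norm_mul, Complex.norm_real, Real.norm_eq_abs, abs_of_pos (by positivity)]
      have hkey : w ω * (1 + t^2 * (w ω)^2)⁻¹ ≤ (2*t)⁻¹ := by
        rw [← div_eq_mul_inv, ← one_div, div_le_div_iff₀ (hden ω) (by positivity)]
        nlinarith [sq_nonneg (t * w ω - 1)]
      calc w ω * ((1 + t^2 * (w ω)^2)⁻¹ * ‖f ω‖)
          = (w ω * (1 + t^2 * (w ω)^2)⁻¹) * ‖f ω‖ := by ring
        _ ≤ (2*t)⁻¹ * ‖f ω‖ := by gcongr
    refine le_trans (iInf_le _ g₀) ?_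
    refine le_trans (iInf_le _ hg₀m) ?_
    refine le_trans (iInf_le _ hg₀lp) ?_
    refine le_trans (iInf_le _ hwg₀lp) ?_
    rw [hcomb g₀ hg₀m]
    refine le_of_eq (lintegral_congr fun ω => ?_)
    have hwo := hwpos ω
    have ha0 : (0:ℝ) < t^2 * (w ω)^2 := by positivity
    have h1a : (0:ℝ) < 1 + t^2 * (w ω)^2 := hden ω
    have hfg : f ω - g₀ ω = ((t^2 * (w ω)^2 / (1 + t^2 * (w ω)^2) : ℝ) : ℂ) * f ω := by
      rw [hg₀]
      have hcc : ((t^2 * (w ω)^2 / (1 + t^2 * (w ω)^2) : ℝ) : ℂ)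
          = 1 - (((1 + t^2 * (w ω)^2)⁻¹ : ℝ) : ℂ) := by
        have h1c : (1 : ℂ) + (t:ℂ)^2 * ((w ω : ℝ) : ℂ)^2 ≠ 0 := by
          exact_mod_cast h1a.ne'
        push_cast
        field_simp
        ring
      rw [hcc]
      ring
    have hn1 : ‖f ω - g₀ ω‖ = t^2 * (w ω)^2 / (1 + t^2 * (w ω)^2) * ‖f ω‖ := by
      rw [hfg, norm_mul, Complex.norm_real, Real.norm_eq_abs, abs_of_pos (by positivity)]
    have hn2 : ‖(w ω : ℂ) * g₀ ω‖ = w ω * ((1 + t^2 * (w ω)^2)⁻¹ * ‖f ω‖) := by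
      rw [norm_mul, Complex.norm_real, Real.norm_eq_abs, abs_of_pos hwo, hg₀norm ω]
    calc (‖f ω - g₀ ω‖₊ : ℝ≥0∞)^2 + ENNReal.ofReal (t^2) * (‖(w ω : ℂ) * g₀ ω‖₊ : ℝ≥0∞)^2
        = ENNReal.ofReal (‖f ω - g₀ ω‖^2 + t^2 * ‖(w ω : ℂ) * g₀ ω‖^2) := by
          rw [ennsq, ennsq, ← ENNReal.ofReal_mul (by positivity : (0:ℝ) ≤ t^2),
            ← ENNReal.ofReal_add (by positivity) (by positivity)]
      _ = ENNReal.ofReal (t^2 * (w ω)^2 / (1 + t^2 * (w ω)^2) * ‖f ω‖^2) := by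
          rw [hn1, hn2]
          congr 1
          field_simp
          ring
      _ = ENNReal.ofReal (t^2 * (w ω)^2 / (1 + t^2 * (w ω)^2)) * (‖f ω‖₊ : ℝ≥0∞)^2 := by
          rw [ennsq, ← ENNReal.ofReal_mul (by positivity)]
  · refine le_iInf fun g => le_iInf fun hg => le_iInf fun _ => le_iInf fun _ => ?_
    rw [hcomb g hg]
    refine lintegral_mono fun ω => ?_
    have hwo := hwpos ω
    set a : ℝ := t^2 * (w ω)^2 with ha
    have ha0 : 0 < a := by positivity
    rw [ennsq, ennsq, ennsq, ← ENNReal.ofReal_mul (by positivity),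
      ← ENNReal.ofReal_mul (by positivity), ← ENNReal.ofReal_add (by positivity) (by positivity)]
    apply ENNReal.ofReal_le_ofReal
    have hnorm : ‖f ω‖ ≤ ‖f ω - g ω‖ + ‖g ω‖ := by
      calc ‖f ω‖ = ‖(f ω - g ω) + g ω‖ := by ring_nf
        _ ≤ ‖f ω - g ω‖ + ‖g ω‖ := norm_add_le _ _
    have hwg : ‖w ω * g ω‖ = w ω * ‖g ω‖ := by
      rw [norm_mul, Complex.norm_real, Real.norm_eq_abs, abs_of_pos hwo]
    calc a / (1 + a) * ‖f ω‖^2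
        ≤ a / (1 + a) * (‖f ω - g ω‖ + ‖g ω‖)^2 :=
          mul_le_mul_of_nonneg_left
            (pow_le_pow_left₀ (norm_nonneg _) hnorm 2) (by positivity)
      _ ≤ ‖f ω - g ω‖^2 + a * ‖g ω‖^2 :=
          quad_ineq ha0.le (norm_nonneg _) (norm_nonneg _)
      _ = ‖f ω - g ω‖^2 + t^2 * ‖w ω * g ω‖^2 := by rw [hwg, ha]; ring

/-- For a σ-finite measure space `(Ω, μ)`, a measurable weight `w : Ω → (0, ∞)`, `0 < θ < 1`
and `f ∈ L²(μ)`, one has, as an identity in `[0, ∞]`: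
`∫₀^∞ t^{-2θ-1} inf { ‖f - g‖₂² + t² ‖w g‖₂² : g measurable, g ∈ L², w g ∈ L² } dt
  = (π / (2 sin πθ)) ∫ w^{2θ} |f|² dμ`. -/
theorem stmt_11 {Ω : Type*} [MeasurableSpace Ω] (μ : Measure Ω) [SigmaFinite μ]
    (w : Ω → ℝ) (hw : Measurable w) (hwpos : ∀ ω, 0 < w ω)
    (θ : ℝ) (hθ : θ ∈ Set.Ioo (0 : ℝ) 1)
    (f : Ω → ℂ) (hf : MemLp f 2 μ) :
    ∫⁻ t in Set.Ioi (0 : ℝ),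
        ENNReal.ofReal (t ^ (-2 * θ - 1)) *
          ⨅ (g : Ω → ℂ) (_ : Measurable g) (_ : MemLp g 2 μ)
            (_ : MemLp (fun ω => w ω * g ω) 2 μ),
            ((∫⁻ ω, (‖f ω - g ω‖₊ : ℝ≥0∞) ^ 2 ∂μ) +
              ENNReal.ofReal (t ^ 2) * ∫⁻ ω, (‖w ω * g ω‖₊ : ℝ≥0∞) ^ 2 ∂μ)
      = ENNReal.ofReal (Real.pi / (2 * Real.sin (Real.pi * θ))) *
          ∫⁻ ω, ENNReal.ofReal (w ω ^ (2 * θ)) * (‖f ω‖₊ : ℝ≥0∞) ^ 2 ∂μ := by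
  -- replace f by a measurable representative
  have hasm := hf.1
  set f' : Ω → ℂ := hasm.mk f with hf'def
  have hf'm : Measurable f' := hasm.stronglyMeasurable_mk.measurable
  have hff' : f =ᵐ[μ] f' := hasm.ae_eq_mk
  have hf' : MemLp f' 2 μ := hf.ae_eq hff'
  have hIf : ∀ g : Ω → ℂ, (∫⁻ ω, (‖f ω - g ω‖₊ : ℝ≥0∞) ^ 2 ∂μ)
      = ∫⁻ ω, (‖f' ω - g ω‖₊ : ℝ≥0∞) ^ 2 ∂μ := fun g =>
    lintegral_congr_ae (by filter_upwards [hff'] with ω h; rw [h])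
  have hRf : (∫⁻ ω, ENNReal.ofReal (w ω ^ (2 * θ)) * (‖f ω‖₊ : ℝ≥0∞) ^ 2 ∂μ)
      = ∫⁻ ω, ENNReal.ofReal (w ω ^ (2 * θ)) * (‖f' ω‖₊ : ℝ≥0∞) ^ 2 ∂μ :=
    lintegral_congr_ae (by filter_upwards [hff'] with ω h; rw [h])
  simp only [hIf]
  rw [hRf]
  -- compute the infimum for each t > 0
  have step1 : ∀ t ∈ Ioi (0:ℝ), ENNReal.ofReal (t ^ (-2 * θ - 1)) *
        (⨅ (g : Ω → ℂ) (_ : Measurable g) (_ : MemLp g 2 μ)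
          (_ : MemLp (fun ω => w ω * g ω) 2 μ),
          ((∫⁻ ω, (‖f' ω - g ω‖₊ : ℝ≥0∞) ^ 2 ∂μ) +
            ENNReal.ofReal (t ^ 2) * ∫⁻ ω, (‖w ω * g ω‖₊ : ℝ≥0∞) ^ 2 ∂μ))
      = ∫⁻ ω, ENNReal.ofReal (t ^ (-2 * θ - 1)) *
          (ENNReal.ofReal (t^2 * (w ω)^2 / (1 + t^2 * (w ω)^2)) * (‖f' ω‖₊ : ℝ≥0∞) ^ 2) ∂μ := by
    intro t ht
    rw [inf_eq μ w hw hwpos f' hf'm hf' ht, ← lintegral_const_mul _ (by fun_prop)]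
  rw [setLIntegral_congr_fun measurableSet_Ioi step1]
  -- Tonelli
  rw [lintegral_lintegral_swap (by fun_prop)]
  -- compute the t-integral for each ω
  have step3 : ∀ ω, (∫⁻ t in Ioi (0:ℝ), ENNReal.ofReal (t ^ (-2 * θ - 1)) *
        (ENNReal.ofReal (t^2 * (w ω)^2 / (1 + t^2 * (w ω)^2)) * (‖f' ω‖₊ : ℝ≥0∞) ^ 2))
      = ENNReal.ofReal (π / (2 * Real.sin (π * θ)))
          * (ENNReal.ofReal ((w ω) ^ (2 * θ)) * (‖f' ω‖₊ : ℝ≥0∞) ^ 2) := by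
    intro ω
    calc ∫⁻ t in Ioi (0:ℝ), ENNReal.ofReal (t ^ (-2 * θ - 1)) *
          (ENNReal.ofReal (t^2 * (w ω)^2 / (1 + t^2 * (w ω)^2)) * (‖f' ω‖₊ : ℝ≥0∞) ^ 2)
        = ∫⁻ t in Ioi (0:ℝ), (ENNReal.ofReal (t ^ (-2 * θ - 1)) *
            ENNReal.ofReal (t^2 * (w ω)^2 / (1 + t^2 * (w ω)^2))) * (‖f' ω‖₊ : ℝ≥0∞) ^ 2 := by
          simp_rw [mul_assoc]
      _ = (∫⁻ t in Ioi (0:ℝ), ENNReal.ofReal (t ^ (-2 * θ - 1)) *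
            ENNReal.ofReal (t^2 * (w ω)^2 / (1 + t^2 * (w ω)^2))) * (‖f' ω‖₊ : ℝ≥0∞) ^ 2 :=
          lintegral_mul_const _ (by fun_prop)
      _ = (ENNReal.ofReal (π / (2 * Real.sin (π * θ))) * ENNReal.ofReal ((w ω) ^ (2 * θ)))
            * (‖f' ω‖₊ : ℝ≥0∞) ^ 2 := by
          rw [show (fun t : ℝ => ENNReal.ofReal (t ^ (-2 * θ - 1)) *
              ENNReal.ofReal (t^2 * (w ω)^2 / (1 + t^2 * (w ω)^2)))
            = fun t : ℝ => ENNReal.ofReal (t ^ (-2*θ-1)) *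
              ENNReal.ofReal (t^2 * (w ω)^2 / (1 + t^2 * (w ω)^2)) from rfl]
          rw [Jb hθ (hwpos ω)]
      _ = ENNReal.ofReal (π / (2 * Real.sin (π * θ)))
            * (ENNReal.ofReal ((w ω) ^ (2 * θ)) * (‖f' ω‖₊ : ℝ≥0∞) ^ 2) := by
          rw [mul_assoc]
  rw [lintegral_congr step3, lintegral_const_mul _ (by fun_prop)]
end
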